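/- Let L be a 7-dimensional complex Leibniz algebra with basis {l, p₊, p₋, X₁, X₂, X₃, X₄} such that the brackets among {l, p₊, p₋} are congruent modulo I = span{X₁,X₂,X₃,X₄} to the e(2) relations ([l,p₊]≡p₊, [l,p₋]≡-p₋, [p₊,p₋]≡0, etc.), [L,I]=0, and the right action of e(2) on I is given by [X₁,p₊]=X₂, [X₃,p₋]=X₄, [X₁,l]=½X₁, [X₂,l]=-½X₂, [X₃,l]=-½X₃, [X₄,l]=½X₄ (other actions zero). Then there exists a new basis {l', p₊', p₋', X₁, X₂, X₃, X₄} of L in which the only nonzero products are [l',p₊']=p₊', [p₊',l']=-p₊', [l',p₋']=-p₋', [p₋',l']=p₋', [X₁,p₊']=X₂, [X₃,p₋']=X₄, [X₁,l']=½X₁, [X₂,l']=-½X₂, [X₃,l']=-½X₃, [X₄,l']=½X₄. -/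

import Mathlib

set_option maxHeartbeats 1000000 in
/-- Classification theorem: a Leibniz algebra `L` with `L/I ≅ e(2)` and ideal
`I = span{X₁,X₂,X₃,X₄}` carrying the given 4-dimensional right `e(2)`-module structure
admits a basis `{l', p₊', p₋', X₁, X₂, X₃, X₄}` (with `l', p₊', p₋'` congruent to
`l, p₊, p₋` modulo `I`) whose only nonzero products are
`[l',p₊']=p₊', [p₊',l']=-p₊', [l',p₋']=-p₋', [p₋',l']=p₋', [X₁,p₊']=X₂, [X₃,p₋']=X₄,
[X₁,l']=½X₁, [X₂,l']=-½X₂, [X₃,l']=-½X₃, [X₄,l']=½X₄`. -/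
theorem stmt_10 {L : Type*} [AddCommGroup L] [Module ℂ L]
    (br : L →ₗ[ℂ] L →ₗ[ℂ] L)
    (leib : ∀ x y z : L, br (br x y) z = br (br x z) y + br x (br y z))
    -- basis ordering: 0 = l, 1 = p₊, 2 = p₋, 3 = X₁, 4 = X₂, 5 = X₃, 6 = X₄
    (b : Module.Basis (Fin 7) ℂ L)
    (I : Submodule ℂ L) (hI : I = Submodule.span ℂ {b 3, b 4, b 5, b 6})
    -- [L, I] = 0
    (hLI : ∀ x : L, ∀ i ∈ I, br x i = 0)
    -- brackets among {l, p₊, p₋} are congruent mod I to the e(2) relations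
    (c1 : br (b 0) (b 1) - b 1 ∈ I) (c2 : br (b 1) (b 0) + b 1 ∈ I)
    (c3 : br (b 0) (b 2) + b 2 ∈ I) (c4 : br (b 2) (b 0) - b 2 ∈ I)
    (c5 : br (b 1) (b 2) ∈ I) (c6 : br (b 2) (b 1) ∈ I)
    (c7 : br (b 0) (b 0) ∈ I) (c8 : br (b 1) (b 1) ∈ I) (c9 : br (b 2) (b 2) ∈ I)
    -- the right action of e(2) on I
    (a1 : br (b 3) (b 0) = (1/2 : ℂ) • b 3) (a2 : br (b 3) (b 1) = b 4)
    (a3 : br (b 3) (b 2) = 0)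
    (a4 : br (b 4) (b 0) = -((1/2 : ℂ) • b 4)) (a5 : br (b 4) (b 1) = 0)
    (a6 : br (b 4) (b 2) = 0)
    (a7 : br (b 5) (b 0) = -((1/2 : ℂ) • b 5)) (a8 : br (b 5) (b 1) = 0)
    (a9 : br (b 5) (b 2) = b 6)
    (a10 : br (b 6) (b 0) = (1/2 : ℂ) • b 6) (a11 : br (b 6) (b 1) = 0)
    (a12 : br (b 6) (b 2) = 0) :
    ∃ l' pp' pm' : L, l' - b 0 ∈ I ∧ pp' - b 1 ∈ I ∧ pm' - b 2 ∈ I ∧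
      Submodule.span ℂ (Set.range ![l', pp', pm', b 3, b 4, b 5, b 6]) = ⊤ ∧
      ∀ i j : Fin 7,
        br (![l', pp', pm', b 3, b 4, b 5, b 6] i) (![l', pp', pm', b 3, b 4, b 5, b 6] j) =
        ![![0, pp', -pm', 0, 0, 0, 0],
          ![-pp', 0, 0, 0, 0, 0, 0],
          ![pm', 0, 0, 0, 0, 0, 0],
          ![(1/2 : ℂ) • b 3, b 4, 0, 0, 0, 0, 0],
          ![-((1/2 : ℂ) • b 4), 0, 0, 0, 0, 0, 0],
          ![-((1/2 : ℂ) • b 5), 0, b 6, 0, 0, 0, 0],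
          ![(1/2 : ℂ) • b 6, 0, 0, 0, 0, 0, 0]] i j := by
  classical
  have hb3I : b 3 ∈ I := by rw [hI]; exact Submodule.subset_span (by simp)
  have hb4I : b 4 ∈ I := by rw [hI]; exact Submodule.subset_span (by simp)
  have hb5I : b 5 ∈ I := by rw [hI]; exact Submodule.subset_span (by simp)
  have hb6I : b 6 ∈ I := by rw [hI]; exact Submodule.subset_span (by simp)
  have hsetr : ({b 3, b 4, b 5, b 6} : Set L) = Set.range ![b 3, b 4, b 5, b 6] := by
    ext x
    simp only [Set.mem_insert_iff, Set.mem_singleton_iff, Set.mem_range]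
    constructor
    · rintro (rfl | rfl | rfl | rfl)
      exacts [⟨0, rfl⟩, ⟨1, rfl⟩, ⟨2, rfl⟩, ⟨3, rfl⟩]
    · rintro ⟨i, rfl⟩
      fin_cases i <;> simp
  have hrep : ∀ v ∈ I, ∃ c : Fin 4 → ℂ,
      v = c 0 • b 3 + c 1 • b 4 + c 2 • b 5 + c 3 • b 6 := by
    intro v hv
    rw [hI, hsetr, Submodule.mem_span_range_iff_exists_fun] at hv
    obtain ⟨c, hc⟩ := hv
    refine ⟨c, ?_⟩
    rw [← hc, Fin.sum_univ_four]
    rfl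
  -- operator identities on I
  have hT2 : ∀ v ∈ I, br (br v (b 0)) (b 0) = (1/4 : ℂ) • v := by
    intro v hv; obtain ⟨c, rfl⟩ := hrep v hv
    simp only [map_add, map_smul, map_neg, LinearMap.add_apply, LinearMap.smul_apply,
      LinearMap.neg_apply, smul_neg, a1, a4, a7, a10]
    module
  have hTP : ∀ v ∈ I, br (br v (b 1)) (b 0) = -((1/2 : ℂ) • br v (b 1)) := by
    intro v hv; obtain ⟨c, rfl⟩ := hrep v hv
    simp only [map_add, map_smul, map_neg, map_zero, LinearMap.add_apply, LinearMap.smul_apply,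
      LinearMap.neg_apply, LinearMap.zero_apply, smul_neg, smul_zero, a1, a2, a3, a4, a5, a6,
      a7, a8, a9, a10, a11, a12, add_zero, zero_add]
    module
  have hPT : ∀ v ∈ I, br (br v (b 0)) (b 1) = (1/2 : ℂ) • br v (b 1) := by
    intro v hv; obtain ⟨c, rfl⟩ := hrep v hv
    simp only [map_add, map_smul, map_neg, map_zero, LinearMap.add_apply, LinearMap.smul_apply,
      LinearMap.neg_apply, LinearMap.zero_apply, smul_neg, smul_zero, a1, a2, a3, a4, a5, a6,
      a7, a8, a9, a10, a11, a12, add_zero, zero_add]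
    module
  have hTM : ∀ v ∈ I, br (br v (b 2)) (b 0) = (1/2 : ℂ) • br v (b 2) := by
    intro v hv; obtain ⟨c, rfl⟩ := hrep v hv
    simp only [map_add, map_smul, map_neg, map_zero, LinearMap.add_apply, LinearMap.smul_apply,
      LinearMap.neg_apply, LinearMap.zero_apply, smul_neg, smul_zero, a1, a2, a3, a4, a5, a6,
      a7, a8, a9, a10, a11, a12, add_zero, zero_add]
    module
  have hMT : ∀ v ∈ I, br (br v (b 0)) (b 2) = -((1/2 : ℂ) • br v (b 2)) := by
    intro v hv; obtain ⟨c, rfl⟩ := hrep v hv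
    simp only [map_add, map_smul, map_neg, map_zero, LinearMap.add_apply, LinearMap.smul_apply,
      LinearMap.neg_apply, LinearMap.zero_apply, smul_neg, smul_zero, a1, a2, a3, a4, a5, a6,
      a7, a8, a9, a10, a11, a12, add_zero, zero_add]
    module
  have hPP : ∀ v ∈ I, br (br v (b 1)) (b 1) = 0 := by
    intro v hv; obtain ⟨c, rfl⟩ := hrep v hv
    simp only [map_add, map_smul, map_neg, map_zero, LinearMap.add_apply, LinearMap.smul_apply,
      LinearMap.neg_apply, LinearMap.zero_apply, smul_neg, smul_zero, a1, a2, a3, a4, a5, a6,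
      a7, a8, a9, a10, a11, a12, add_zero, zero_add]
    try module
  have hMM : ∀ v ∈ I, br (br v (b 2)) (b 2) = 0 := by
    intro v hv; obtain ⟨c, rfl⟩ := hrep v hv
    simp only [map_add, map_smul, map_neg, map_zero, LinearMap.add_apply, LinearMap.smul_apply,
      LinearMap.neg_apply, LinearMap.zero_apply, smul_neg, smul_zero, a1, a2, a3, a4, a5, a6,
      a7, a8, a9, a10, a11, a12, add_zero, zero_add]
    try module
  have hPM : ∀ v ∈ I, br (br v (b 2)) (b 1) = 0 := by
    intro v hv; obtain ⟨c, rfl⟩ := hrep v hv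
    simp only [map_add, map_smul, map_neg, map_zero, LinearMap.add_apply, LinearMap.smul_apply,
      LinearMap.neg_apply, LinearMap.zero_apply, smul_neg, smul_zero, a1, a2, a3, a4, a5, a6,
      a7, a8, a9, a10, a11, a12, add_zero, zero_add]
    try module
  have hMP : ∀ v ∈ I, br (br v (b 1)) (b 2) = 0 := by
    intro v hv; obtain ⟨c, rfl⟩ := hrep v hv
    simp only [map_add, map_smul, map_neg, map_zero, LinearMap.add_apply, LinearMap.smul_apply,
      LinearMap.neg_apply, LinearMap.zero_apply, smul_neg, smul_zero, a1, a2, a3, a4, a5, a6,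
      a7, a8, a9, a10, a11, a12, add_zero, zero_add]
    try module
  -- closure of I under the right actions
  have hTcl : ∀ v ∈ I, br v (b 0) ∈ I := by
    intro v hv; obtain ⟨c, rfl⟩ := hrep v hv
    simp only [map_add, map_smul, LinearMap.add_apply, LinearMap.smul_apply, a1, a4, a7, a10]
    apply_rules [Submodule.add_mem, Submodule.smul_mem, Submodule.neg_mem, Submodule.zero_mem,
      hb3I, hb4I, hb5I, hb6I]
  have hPcl : ∀ v ∈ I, br v (b 1) ∈ I := by
    intro v hv; obtain ⟨c, rfl⟩ := hrep v hv
    simp only [map_add, map_smul, LinearMap.add_apply, LinearMap.smul_apply, a2, a5, a8, a11]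
    apply_rules [Submodule.add_mem, Submodule.smul_mem, Submodule.neg_mem, Submodule.zero_mem,
      hb3I, hb4I, hb5I, hb6I]
  have hMcl : ∀ v ∈ I, br v (b 2) ∈ I := by
    intro v hv; obtain ⟨c, rfl⟩ := hrep v hv
    simp only [map_add, map_smul, LinearMap.add_apply, LinearMap.smul_apply, a3, a6, a9, a12]
    apply_rules [Submodule.add_mem, Submodule.smul_mem, Submodule.neg_mem, Submodule.zero_mem,
      hb3I, hb4I, hb5I, hb6I]
  -- injectivity style lemmas
  have hTinj : ∀ v ∈ I, br v (b 0) = 0 → v = 0 := by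
    intro v hv h
    have h2 := hT2 v hv
    rw [h, map_zero, LinearMap.zero_apply] at h2
    have h3 : (1/4 : ℂ) • v = 0 := h2.symm
    have := (smul_eq_zero.mp h3).resolve_left (by norm_num)
    exact this
  have h2pT : ∀ v ∈ I, (2 : ℂ) • v + br v (b 0) = 0 → v = 0 := by
    intro v hv h
    have hTv : br v (b 0) = -((2 : ℂ) • v) := eq_neg_of_add_eq_zero_right h
    have h2 := hT2 v hv
    rw [hTv, map_neg, map_smul, LinearMap.neg_apply, LinearMap.smul_apply, hTv] at h2
    have h3 : (-(15/4) : ℂ) • v = 0 := by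
      linear_combination (norm := module) (-1 : ℂ) • h2
    exact (smul_eq_zero.mp h3).resolve_left (by norm_num)
  have hT2inj : ∀ v ∈ I, br v (b 0) = (2 : ℂ) • v → v = 0 := by
    intro v hv h
    have h2 := hT2 v hv
    rw [h, map_smul, LinearMap.smul_apply, h] at h2
    have h3 : ((15/4) : ℂ) • v = 0 := by
      linear_combination (norm := module) h2
    exact (smul_eq_zero.mp h3).resolve_left (by norm_num)
  -- names for the defect elements
  obtain ⟨u1, hu1I, hu1⟩ : ∃ u, u ∈ I ∧ br (b 0) (b 1) = b 1 + u := ⟨_, c1, by abel⟩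
  obtain ⟨u2, hu2I, hu2⟩ : ∃ u, u ∈ I ∧ br (b 1) (b 0) = -b 1 + u := ⟨_, c2, by abel⟩
  obtain ⟨u3, hu3I, hu3⟩ : ∃ u, u ∈ I ∧ br (b 0) (b 2) = -b 2 + u := ⟨_, c3, by abel⟩
  obtain ⟨u4, hu4I, hu4⟩ : ∃ u, u ∈ I ∧ br (b 2) (b 0) = b 2 + u := ⟨_, c4, by abel⟩
  obtain ⟨u5, hu5I, hu5⟩ : ∃ u, u ∈ I ∧ br (b 1) (b 2) = u := ⟨_, c5, rfl⟩
  obtain ⟨u6, hu6I, hu6⟩ : ∃ u, u ∈ I ∧ br (b 2) (b 1) = u := ⟨_, c6, rfl⟩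
  obtain ⟨u7, hu7I, hu7⟩ : ∃ u, u ∈ I ∧ br (b 0) (b 0) = u := ⟨_, c7, rfl⟩
  obtain ⟨u8, hu8I, hu8⟩ : ∃ u, u ∈ I ∧ br (b 1) (b 1) = u := ⟨_, c8, rfl⟩
  obtain ⟨u9, hu9I, hu9⟩ : ∃ u, u ∈ I ∧ br (b 2) (b 2) = u := ⟨_, c9, rfl⟩
  have zu2 : ∀ x : L, br x u2 = 0 := fun x => hLI x u2 hu2I
  have zu4 : ∀ x : L, br x u4 = 0 := fun x => hLI x u4 hu4I
  -- Leibniz relations among the defects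
  have R1 : u2 + br u1 (b 0) = br u7 (b 1) - u1 := by
    have h := leib (b 0) (b 1) (b 0)
    simp only [hu1, hu2, hu7, map_add, map_neg, LinearMap.add_apply, LinearMap.neg_apply,
      zu2, add_zero] at h
    linear_combination (norm := module) h
  have R2 : br u8 (b 0) = br u2 (b 1) - (2 : ℂ) • u8 := by
    have h := leib (b 1) (b 1) (b 0)
    simp only [hu8, hu2, map_add, map_neg, LinearMap.add_apply, LinearMap.neg_apply,
      zu2, add_zero] at h
    linear_combination (norm := module) h
  have R4 : br u5 (b 0) = br u2 (b 2) := by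
    have h := leib (b 1) (b 2) (b 0)
    simp only [hu5, hu2, hu4, map_add, map_neg, LinearMap.add_apply, LinearMap.neg_apply,
      zu2, zu4, add_zero] at h
    linear_combination (norm := module) h
  have R5 : br u3 (b 0) - u3 = br u7 (b 2) + u4 := by
    have h := leib (b 0) (b 2) (b 0)
    simp only [hu3, hu4, hu7, map_add, map_neg, LinearMap.add_apply, LinearMap.neg_apply,
      zu4, add_zero] at h
    linear_combination (norm := module) h
  have R6 : br u9 (b 0) = (2 : ℂ) • u9 + br u4 (b 2) := by
    have h := leib (b 2) (b 2) (b 0)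
    simp only [hu9, hu4, map_add, LinearMap.add_apply, zu4, add_zero] at h
    linear_combination (norm := module) h
  have R7 : br u6 (b 0) = br u4 (b 1) := by
    have h := leib (b 2) (b 1) (b 0)
    simp only [hu6, hu4, hu2, map_add, map_neg, LinearMap.add_apply, LinearMap.neg_apply,
      zu2, zu4, add_zero] at h
    linear_combination (norm := module) h
  -- images of u2, u4 under the actions of p₊, p₋
  have hPu2 : br u2 (b 1) = -(((3 : ℂ)/2) • br u1 (b 1)) := by
    have h : br (u2 + br u1 (b 0)) (b 1) = br (br u7 (b 1) - u1) (b 1) := by rw [R1]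
    rw [map_add, LinearMap.add_apply, map_sub, LinearMap.sub_apply,
      hPT u1 hu1I, hPP u7 hu7I] at h
    linear_combination (norm := module) h
  have hMu2 : br u2 (b 2) = -(((1 : ℂ)/2) • br u1 (b 2)) := by
    have h : br (u2 + br u1 (b 0)) (b 2) = br (br u7 (b 1) - u1) (b 2) := by rw [R1]
    rw [map_add, LinearMap.add_apply, map_sub, LinearMap.sub_apply,
      hMT u1 hu1I, hMP u7 hu7I] at h
    linear_combination (norm := module) h
  have hPu4 : br u4 (b 1) = -(((1 : ℂ)/2) • br u3 (b 1)) := by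
    have h : br (br u3 (b 0) - u3) (b 1) = br (br u7 (b 2) + u4) (b 1) := by rw [R5]
    rw [map_sub, LinearMap.sub_apply, map_add, LinearMap.add_apply,
      hPT u3 hu3I, hPM u7 hu7I] at h
    linear_combination (norm := module) (-1 : ℂ) • h
  have hMu4 : br u4 (b 2) = -(((3 : ℂ)/2) • br u3 (b 2)) := by
    have h : br (br u3 (b 0) - u3) (b 2) = br (br u7 (b 2) + u4) (b 2) := by rw [R5]
    rw [map_sub, LinearMap.sub_apply, map_add, LinearMap.add_apply,
      hMT u3 hu3I, hMM u7 hu7I] at h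
    linear_combination (norm := module) (-1 : ℂ) • h
  -- the correcting elements
  set a : L := -((4 : ℂ) • br u7 (b 0)) with ha
  have haI : a ∈ I := Submodule.neg_mem _ (Submodule.smul_mem _ _ (hTcl u7 hu7I))
  have hTa : br a (b 0) = -u7 := by
    rw [ha, map_neg, map_smul, LinearMap.neg_apply, LinearMap.smul_apply, hT2 u7 hu7I]
    module
  have hPa : br a (b 1) = -((2 : ℂ) • br u7 (b 1)) := by
    rw [ha, map_neg, map_smul, LinearMap.neg_apply, LinearMap.smul_apply, hPT u7 hu7I]
    module
  have hMa : br a (b 2) = (2 : ℂ) • br u7 (b 2) := by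
    rw [ha, map_neg, map_smul, LinearMap.neg_apply, LinearMap.smul_apply, hMT u7 hu7I]
    module
  set bb : L := u1 + br a (b 1) with hbb
  have hbbI : bb ∈ I := Submodule.add_mem _ hu1I (hPcl a haI)
  set cc : L := -u3 - br a (b 2) with hcc
  have hccI : cc ∈ I := Submodule.sub_mem _ (Submodule.neg_mem _ hu3I) (hMcl a haI)
  -- the vanishing relations
  have E2 : u8 + br u1 (b 1) = 0 := by
    apply h2pT _ (Submodule.add_mem _ hu8I (hPcl u1 hu1I))
    rw [map_add, LinearMap.add_apply, R2, hPu2, hTP u1 hu1I]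
    module
  have E3 : u5 + br u1 (b 2) = 0 := by
    apply hTinj _ (Submodule.add_mem _ hu5I (hMcl u1 hu1I))
    rw [map_add, LinearMap.add_apply, R4, hMu2, hTM u1 hu1I]
    module
  have E5 : u9 = br u3 (b 2) := by
    have h : u9 - br u3 (b 2) = 0 := by
      apply hT2inj _ (Submodule.sub_mem _ hu9I (hMcl u3 hu3I))
      rw [map_sub, LinearMap.sub_apply, R6, hMu4, hTM u3 hu3I]
      module
    rwa [sub_eq_zero] at h
  have E6 : u6 = br u3 (b 1) := by
    have h : u6 - br u3 (b 1) = 0 := by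
      apply hTinj _ (Submodule.sub_mem _ hu6I (hPcl u3 hu3I))
      rw [map_sub, LinearMap.sub_apply, R7, hPu4, hTP u3 hu3I]
      module
    rwa [sub_eq_zero] at h
  -- the new basis elements
  set l' : L := b 0 + a with hl'
  set pp' : L := b 1 + bb with hpp'
  set pm' : L := b 2 + cc with hpm'
  have e_l : ∀ x : L, br x l' = br x (b 0) := fun x => by
    rw [hl', map_add, hLI x a haI, add_zero]
  have e_pp : ∀ x : L, br x pp' = br x (b 1) := fun x => by
    rw [hpp', map_add, hLI x bb hbbI, add_zero]
  have e_pm : ∀ x : L, br x pm' = br x (b 2) := fun x => by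
    rw [hpm', map_add, hLI x cc hccI, add_zero]
  -- the nine brackets among the new generators
  have F00 : br l' l' = 0 := by
    rw [e_l, hl', map_add, LinearMap.add_apply, hu7, hTa]
    abel
  have F01 : br l' pp' = pp' := by
    rw [e_pp, hl', hpp', hbb, map_add, LinearMap.add_apply, hu1]
    abel
  have F02 : br l' pm' = -pm' := by
    rw [e_pm, hl', hpm', hcc, map_add, LinearMap.add_apply, hu3]
    abel
  have F10 : br pp' l' = -pp' := by
    rw [e_l, hpp', hbb, map_add, LinearMap.add_apply, hu2, map_add, LinearMap.add_apply,
      hTP a haI, hPa]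
    linear_combination (norm := module) R1
  have F11 : br pp' pp' = 0 := by
    rw [e_pp, hpp', hbb, map_add, LinearMap.add_apply, hu8, map_add, LinearMap.add_apply,
      hPP a haI, add_zero]
    exact E2
  have F12 : br pp' pm' = 0 := by
    rw [e_pm, hpp', hbb, map_add, LinearMap.add_apply, hu5, map_add, LinearMap.add_apply,
      hMP a haI, add_zero]
    exact E3
  have F20 : br pm' l' = pm' := by
    rw [e_l, hpm', hcc, map_add, LinearMap.add_apply, hu4, map_sub, LinearMap.sub_apply,
      map_neg, LinearMap.neg_apply, hTM a haI, hMa]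
    linear_combination (norm := module) (-1 : ℂ) • R5
  have F21 : br pm' pp' = 0 := by
    rw [e_pp, hpm', hcc, map_add, LinearMap.add_apply, hu6, map_sub, LinearMap.sub_apply,
      map_neg, LinearMap.neg_apply, hPM a haI, sub_zero, E6]
    abel
  have F22 : br pm' pm' = 0 := by
    rw [e_pm, hpm', hcc, map_add, LinearMap.add_apply, hu9, map_sub, LinearMap.sub_apply,
      map_neg, LinearMap.neg_apply, hMM a haI, sub_zero, E5]
    abel
  -- brackets of the Xᵢ with the new generators
  have G30 : br (b 3) l' = (1/2 : ℂ) • b 3 := by rw [e_l]; exact a1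
  have G31 : br (b 3) pp' = b 4 := by rw [e_pp]; exact a2
  have G32 : br (b 3) pm' = 0 := by rw [e_pm]; exact a3
  have G40 : br (b 4) l' = -((1/2 : ℂ) • b 4) := by rw [e_l]; exact a4
  have G41 : br (b 4) pp' = 0 := by rw [e_pp]; exact a5
  have G42 : br (b 4) pm' = 0 := by rw [e_pm]; exact a6
  have G50 : br (b 5) l' = -((1/2 : ℂ) • b 5) := by rw [e_l]; exact a7
  have G51 : br (b 5) pp' = 0 := by rw [e_pp]; exact a8
  have G52 : br (b 5) pm' = b 6 := by rw [e_pm]; exact a9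
  have G60 : br (b 6) l' = (1/2 : ℂ) • b 6 := by rw [e_l]; exact a10
  have G61 : br (b 6) pp' = 0 := by rw [e_pp]; exact a11
  have G62 : br (b 6) pm' = 0 := by rw [e_pm]; exact a12
  have z3 : ∀ x : L, br x (b 3) = 0 := fun x => hLI x _ hb3I
  have z4 : ∀ x : L, br x (b 4) = 0 := fun x => hLI x _ hb4I
  have z5 : ∀ x : L, br x (b 5) = 0 := fun x => hLI x _ hb5I
  have z6 : ∀ x : L, br x (b 6) = 0 := fun x => hLI x _ hb6I
  refine ⟨l', pp', pm', ?_, ?_, ?_, ?_, ?_⟩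
  · rw [hl', add_sub_cancel_left]; exact haI
  · rw [hpp', add_sub_cancel_left]; exact hbbI
  · rw [hpm', add_sub_cancel_left]; exact hccI
  · rw [eq_top_iff, ← b.span_eq]
    have hIle : I ≤ Submodule.span ℂ (Set.range ![l', pp', pm', b 3, b 4, b 5, b 6]) := by
      rw [hI]
      apply Submodule.span_le.mpr
      rintro x (rfl | rfl | rfl | rfl)
      exacts [Submodule.subset_span ⟨3, rfl⟩, Submodule.subset_span ⟨4, rfl⟩,
        Submodule.subset_span ⟨5, rfl⟩, Submodule.subset_span ⟨6, rfl⟩]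
    apply Submodule.span_le.mpr
    have m0 : b 0 ∈ Submodule.span ℂ (Set.range ![l', pp', pm', b 3, b 4, b 5, b 6]) := by
      have hb0 : b 0 = l' - a := by rw [hl']; abel
      rw [hb0]
      exact Submodule.sub_mem _ (Submodule.subset_span ⟨0, rfl⟩) (hIle haI)
    have m1 : b 1 ∈ Submodule.span ℂ (Set.range ![l', pp', pm', b 3, b 4, b 5, b 6]) := by
      have hb1 : b 1 = pp' - bb := by rw [hpp']; abel
      rw [hb1]
      exact Submodule.sub_mem _ (Submodule.subset_span ⟨1, rfl⟩) (hIle hbbI)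
    have m2 : b 2 ∈ Submodule.span ℂ (Set.range ![l', pp', pm', b 3, b 4, b 5, b 6]) := by
      have hb2 : b 2 = pm' - cc := by rw [hpm']; abel
      rw [hb2]
      exact Submodule.sub_mem _ (Submodule.subset_span ⟨2, rfl⟩) (hIle hccI)
    rintro x ⟨i, rfl⟩
    fin_cases i
    exacts [m0, m1, m2, Submodule.subset_span ⟨3, rfl⟩, Submodule.subset_span ⟨4, rfl⟩,
      Submodule.subset_span ⟨5, rfl⟩, Submodule.subset_span ⟨6, rfl⟩]
  · intro i j
    fin_cases i <;> fin_cases j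
    exacts [F00, F01, F02, z3 l', z4 l', z5 l', z6 l',
      F10, F11, F12, z3 pp', z4 pp', z5 pp', z6 pp',
      F20, F21, F22, z3 pm', z4 pm', z5 pm', z6 pm',
      G30, G31, G32, z3 (b 3), z4 (b 3), z5 (b 3), z6 (b 3),
      G40, G41, G42, z3 (b 4), z4 (b 4), z5 (b 4), z6 (b 4),
      G50, G51, G52, z3 (b 5), z4 (b 5), z5 (b 5), z6 (b 5),
      G60, G61, G62, z3 (b 6), z4 (b 6), z5 (b 6), z6 (b 6)]
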